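/- Let A and B be positive definite d×d real matrices with A ⪰ B. Then for every x ∈ ℝ^d, ‖x‖_{B^{-1}} ≤ ‖x‖_{A^{-1}} · √(det(A)/det(B)), where ‖x‖_M := √(x^T M x). -/

import Mathlib

open Matrix

section Aux

variable {d : ℕ}

/-- Conjugation of a quadratic form. -/
private lemma dot_conj (M N : Matrix (Fin d) (Fin d) ℝ) (x : Fin d → ℝ) :
    (N *ᵥ x) ⬝ᵥ M *ᵥ (N *ᵥ x) = x ⬝ᵥ (Nᵀ * M * N) *ᵥ x := by
  rw [← Matrix.mulVec_mulVec, ← Matrix.mulVec_mulVec, Matrix.dotProduct_mulVec x,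
    Matrix.vecMul_transpose]

/-- Conjugation by an invertible matrix preserves positive definiteness. -/
private lemma posDef_conj {B N : Matrix (Fin d) (Fin d) ℝ} (hB : B.PosDef)
    (hN : IsUnit N.det) : (Nᴴ * B * N).PosDef := by
  refine Matrix.PosDef.of_dotProduct_mulVec_pos (Matrix.isHermitian_conjTranspose_mul_mul N hB.1) fun v hv => ?_
  have hNv : N *ᵥ v ≠ 0 := by
    intro h
    have hinj : Function.Injective N.mulVec :=
      Matrix.mulVec_injective_iff_isUnit.mpr ((Matrix.isUnit_iff_isUnit_det N).mpr hN)
    exact hv (hinj (by simpa using h))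
  have := hB.dotProduct_mulVec_pos hNv
  rwa [Matrix.mulVec_mulVec, Matrix.star_mulVec, ← Matrix.dotProduct_mulVec,
    Matrix.mulVec_mulVec, ← Matrix.mul_assoc] at this

/-- Core lemma: if `0 ≺ C ⪯ 1` then `yᵀ C⁻¹ y ≤ (yᵀ y) / det C`. -/
private lemma dot_inv_le_of_le_one {C : Matrix (Fin d) (Fin d) ℝ} (hC : C.PosDef)
    (h1 : (1 - C).PosSemidef) (y : Fin d → ℝ) :
    y ⬝ᵥ C⁻¹ *ᵥ y ≤ (y ⬝ᵥ y) / C.det := by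
  classical
  have hH : C.IsHermitian := hC.isHermitian
  set μ : Fin d → ℝ := hH.eigenvalues with hμ
  have hpos : ∀ i, 0 < μ i := hC.eigenvalues_pos
  have hle1 : ∀ i, μ i ≤ 1 := by
    intro i
    set v : Fin d → ℝ := ⇑(hH.eigenvectorBasis i) with hv
    have hvne : v ≠ 0 := by
      simpa [hv] using hH.eigenvectorBasis.orthonormal.ne_zero i
    have hvv0 : 0 ≤ v ⬝ᵥ v := Finset.sum_nonneg fun i _ => mul_self_nonneg (v i)
    have hvv : 0 < v ⬝ᵥ v :=
      lt_of_le_of_ne hvv0 (fun h => hvne (dotProduct_self_eq_zero.mp h.symm))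
    have h := h1.dotProduct_mulVec_nonneg v
    rw [star_trivial, Matrix.sub_mulVec, Matrix.one_mulVec, dotProduct_sub,
      hH.mulVec_eigenvectorBasis, dotProduct_smul] at h
    have : (1 - μ i) * (v ⬝ᵥ v) = v ⬝ᵥ v - μ i • (v ⬝ᵥ v) := by ring_nf
    nlinarith [h, hvv]
  have hdet : C.det = ∏ i, μ i := by
    have := hH.det_eq_prod_eigenvalues
    simpa using this
  have hdetpos : 0 < C.det := hC.det_pos
  -- spectral decomposition
  set U : Matrix (Fin d) (Fin d) ℝ := (hH.eigenvectorUnitary : Matrix (Fin d) (Fin d) ℝ) with hU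
  have hU1 : U * star U = 1 := Matrix.mem_unitaryGroup_iff.mp hH.eigenvectorUnitary.2
  have hU1' : star U * U = 1 := Matrix.mem_unitaryGroup_iff'.mp hH.eigenvectorUnitary.2
  have hUinv : U⁻¹ = star U := Matrix.inv_eq_right_inv hU1
  have hsUinv : (star U)⁻¹ = U := Matrix.inv_eq_right_inv hU1'
  have hspec : C = U * Matrix.diagonal μ * star U := by
    have h := hH.spectral_theorem
    rw [hU, hμ]
    convert h using 3
    rw [Unitary.conjStarAlgAut_apply]; rfl
  have hDD : Matrix.diagonal μ * Matrix.diagonal (fun i => (μ i)⁻¹) = 1 := by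
    rw [Matrix.diagonal_mul_diagonal]
    show Matrix.diagonal (fun i => μ i * (μ i)⁻¹) = 1
    rw [show (fun i => μ i * (μ i)⁻¹) = (fun _ => (1:ℝ)) from
      funext fun i => mul_inv_cancel₀ (hpos i).ne', Matrix.diagonal_one]
  have hCinv : C⁻¹ = U * Matrix.diagonal (fun i => (μ i)⁻¹) * star U := by
    refine Matrix.inv_eq_right_inv ?_
    rw [hspec]
    simp only [Matrix.mul_assoc]
    rw [← Matrix.mul_assoc (star U) U, hU1', Matrix.one_mul,
      ← Matrix.mul_assoc (Matrix.diagonal μ), hDD, Matrix.one_mul, hU1]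
  -- express quadratic forms via w
  set w : Fin d → ℝ := star U *ᵥ y with hw
  have hsUt : star U = Uᵀ := by
    rw [Matrix.star_eq_conjTranspose, Matrix.conjTranspose_eq_transpose_of_trivial]
  have hwv : y ᵥ* U = w := by rw [hw, hsUt, Matrix.mulVec_transpose]
  have hquad : y ⬝ᵥ C⁻¹ *ᵥ y = ∑ i, (μ i)⁻¹ * (w i)^2 := by
    rw [hCinv, ← Matrix.mulVec_mulVec, ← Matrix.mulVec_mulVec, Matrix.dotProduct_mulVec,
      hwv, ← hw]
    simp only [dotProduct, Matrix.mulVec_diagonal]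
    exact Finset.sum_congr rfl fun i _ => by ring
  have hyy : y ⬝ᵥ y = ∑ i, (w i)^2 := by
    have hww : w ⬝ᵥ w = y ⬝ᵥ y := by
      have h2 : (y ᵥ* U) ⬝ᵥ (star U *ᵥ y) = y ⬝ᵥ y := by
        rw [← Matrix.dotProduct_mulVec, Matrix.mulVec_mulVec, hU1, Matrix.one_mulVec]
      rw [← h2, hwv, ← hw]
    rw [← hww]
    simp [dotProduct, pow_two]
  rw [hquad, div_eq_mul_inv, hyy, Finset.sum_mul]
  apply Finset.sum_le_sum
  intro i _
  have hprod_le : C.det ≤ μ i := by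
    rw [hdet, ← Finset.prod_erase_mul _ _ (Finset.mem_univ i)]
    have h1' : ∏ j ∈ Finset.univ.erase i, μ j ≤ 1 :=
      Finset.prod_le_one (fun j _ => (hpos j).le) (fun j _ => hle1 j)
    nlinarith [hpos i]
  have hinv_le : (μ i)⁻¹ ≤ (C.det)⁻¹ := by
    rw [← one_div, ← one_div]
    exact one_div_le_one_div_of_le hdetpos hprod_le
  have hw2 : 0 ≤ (w i)^2 := sq_nonneg _
  calc (μ i)⁻¹ * (w i)^2 ≤ (C.det)⁻¹ * (w i)^2 := by nlinarith
    _ = (w i)^2 * (C.det)⁻¹ := by ring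

end Aux

/-- If `A ⪰ B` with both positive definite, then for every `x`,
`‖x‖_{B⁻¹} ≤ ‖x‖_{A⁻¹} · √(det A / det B)` where `‖x‖_M := √(xᵀ M x)`. -/
theorem norm_inv_le_det_ratio (d : ℕ) (A B : Matrix (Fin d) (Fin d) ℝ)
    (hA : A.PosDef) (hB : B.PosDef) (hAB : (A - B).PosSemidef) (x : Fin d → ℝ) :
    Real.sqrt (x ⬝ᵥ B⁻¹ *ᵥ x) ≤
      Real.sqrt (x ⬝ᵥ A⁻¹ *ᵥ x) * Real.sqrt (A.det / B.det) := by
  classical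
  have hdA : 0 < A.det := hA.det_pos
  have hdB : 0 < B.det := hB.det_pos
  open scoped MatrixOrder in
  set S : Matrix (Fin d) (Fin d) ℝ := CFC.sqrt A with hSdef
  open scoped MatrixOrder in
  have hSpsd : S.PosSemidef := (CFC.sqrt_nonneg A).posSemidef
  open scoped MatrixOrder in
  have hSsq : S * S = A := CFC.sqrt_mul_sqrt_self A hA.posSemidef.nonneg
  have hSherm : S.IsHermitian := hSpsd.isHermitian
  have hdS2 : S.det * S.det = A.det := by rw [← Matrix.det_mul, hSsq]
  have hdSnonneg : 0 ≤ S.det := by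
    rw [hSherm.det_eq_prod_eigenvalues]
    exact Finset.prod_nonneg fun i _ => by simpa using hSpsd.eigenvalues_nonneg i
  have hdS : 0 < S.det := lt_of_le_of_ne hdSnonneg (by intro h; rw [← h] at hdS2; nlinarith)
  have hU : IsUnit S.det := hdS.ne'.isUnit
  have hUinv : IsUnit S⁻¹.det := by
    have : S⁻¹.det = (S.det)⁻¹ := by rw [Matrix.det_nonsing_inv, Ring.inverse_eq_inv]
    rw [this]
    exact (inv_pos.mpr hdS).ne'.isUnit
  have hSS : S⁻¹ * S = 1 := Matrix.nonsing_inv_mul S hU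
  have hSS' : S * S⁻¹ = 1 := Matrix.mul_nonsing_inv S hU
  have hSit : (S⁻¹)ᵀ = S⁻¹ := by
    have := hSherm.inv.eq
    rwa [Matrix.conjTranspose_eq_transpose_of_trivial] at this
  set C : Matrix (Fin d) (Fin d) ℝ := S⁻¹ * B * S⁻¹ with hCdef
  have hC : C.PosDef := by
    have := posDef_conj hB hUinv
    rwa [Matrix.conjTranspose_eq_transpose_of_trivial, hSit] at this
  have h1C : (1 - C).PosSemidef := by
    have h := hAB.conjTranspose_mul_mul_same S⁻¹
    have heq : (S⁻¹)ᴴ * (A - B) * S⁻¹ = 1 - C := by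
      rw [Matrix.conjTranspose_eq_transpose_of_trivial, hSit, hCdef, ← hSsq,
        Matrix.mul_sub, Matrix.sub_mul]
      congr 1
      rw [← Matrix.mul_assoc, hSS, Matrix.one_mul, hSS']
    rwa [heq] at h
  have hdetC : C.det = B.det / A.det := by
    rw [hCdef, Matrix.det_mul, Matrix.det_mul, Matrix.det_nonsing_inv, Ring.inverse_eq_inv]
    field_simp [← hdS2]
    rw [← hdS2]; ring
  have hCinv : C⁻¹ = S * B⁻¹ * S := by
    rw [hCdef, Matrix.mul_inv_rev, Matrix.mul_inv_rev, Matrix.nonsing_inv_nonsing_inv S hU,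
      Matrix.mul_assoc]
  set y : Fin d → ℝ := S⁻¹ *ᵥ x with hy
  have e1 : y ⬝ᵥ C⁻¹ *ᵥ y = x ⬝ᵥ B⁻¹ *ᵥ x := by
    rw [hy, dot_conj, hSit, hCinv]
    congr 2
    rw [← Matrix.mul_assoc, ← Matrix.mul_assoc, hSS, Matrix.one_mul, Matrix.mul_assoc, hSS',
      Matrix.mul_one]
  have e2 : y ⬝ᵥ y = x ⬝ᵥ A⁻¹ *ᵥ x := by
    have : y ⬝ᵥ y = y ⬝ᵥ (1 : Matrix (Fin d) (Fin d) ℝ) *ᵥ y := by rw [Matrix.one_mulVec]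
    rw [this, hy, dot_conj, hSit]
    congr 2
    rw [Matrix.mul_one, ← hSsq, Matrix.mul_inv_rev]
  have key : x ⬝ᵥ B⁻¹ *ᵥ x ≤ (x ⬝ᵥ A⁻¹ *ᵥ x) * (A.det / B.det) := by
    have h := dot_inv_le_of_le_one hC h1C y
    rw [e1, e2, hdetC] at h
    calc x ⬝ᵥ B⁻¹ *ᵥ x ≤ (x ⬝ᵥ A⁻¹ *ᵥ x) / (B.det / A.det) := h
      _ = (x ⬝ᵥ A⁻¹ *ᵥ x) * (A.det / B.det) := by field_simp
  have hAx : 0 ≤ x ⬝ᵥ A⁻¹ *ᵥ x := by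
    have := hA.inv.posSemidef.dotProduct_mulVec_nonneg x
    simpa using this
  calc Real.sqrt (x ⬝ᵥ B⁻¹ *ᵥ x) ≤ Real.sqrt ((x ⬝ᵥ A⁻¹ *ᵥ x) * (A.det / B.det)) :=
        Real.sqrt_le_sqrt key
    _ = Real.sqrt (x ⬝ᵥ A⁻¹ *ᵥ x) * Real.sqrt (A.det / B.det) := Real.sqrt_mul hAx _
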